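/- arXiv:1609.01441 — 6 statements merged into one kernel-verified Lean document; each statement's English description precedes it below -/
import Mathlib

section
/- Let f : (0,∞) → ℝ be a continuous nonnegative function such that (1/x)·ln f(x) → 0 as x → +∞ and f'/f is bounded on (0,∞) (f is differentiable and positive). Then liminf_{R→+∞} f(R) / ∫₀^R f(x) dx = 0. -/
open Filter MeasureTheory Topology

/-- If `f` is positive and continuously differentiable on `(0,∞)`, with `f'/f` bounded
and `(ln f x)/x → 0` as `x → ∞`, then `liminf_{R→∞} f(R) / ∫₀^R f = 0`. -/
theorem stmt_0 (f : ℝ → ℝ)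
    (hf_pos : ∀ x ∈ Set.Ioi (0 : ℝ), 0 < f x)
    (hf_cont : ContinuousOn f (Set.Ioi 0))
    (hf_diff : ∀ x ∈ Set.Ioi (0 : ℝ), DifferentiableAt ℝ f x)
    (hf_deriv_cont : ContinuousOn (deriv f) (Set.Ioi 0))
    (M : ℝ) (hM : 0 < M)
    (hbound : ∀ x ∈ Set.Ioi (0 : ℝ), |deriv f x / f x| ≤ M)
    (hlog : Tendsto (fun x => Real.log (f x) / x) atTop (𝓝 0)) :
    liminf (fun R => f R / ∫ x in Set.Ioo (0 : ℝ) R, f x) atTop = 0 := by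
  set I : ℝ → ℝ := fun R => ∫ x in Set.Ioo (0 : ℝ) R, f x with hIdef
  -- log f is M-Lipschitz on (0,∞)
  have hlogbound : ∀ x ∈ Set.Ioi (0 : ℝ), |Real.log (f x) - Real.log (f 1)| ≤ M * |x - 1| := by
    intro x hx
    have h := Convex.norm_image_sub_le_of_norm_hasDerivWithin_le
      (f := fun y => Real.log (f y)) (f' := fun y => deriv f y / f y)
      (fun y hy => (((hf_diff y hy).hasDerivAt).log (hf_pos y hy).ne').hasDerivWithinAt)
      (fun y hy => by rw [Real.norm_eq_abs]; exact hbound y hy)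
      (convex_Ioi 0) (Set.mem_Ioi.mpr one_pos) hx
    simpa [Real.norm_eq_abs] using h
  have hfb : ∀ x ∈ Set.Ioi (0 : ℝ), f x ≤ f 1 * Real.exp (M * |x - 1|) := by
    intro x hx
    have h1 : Real.log (f x) ≤ Real.log (f 1) + M * |x - 1| := by
      have := (abs_le.mp (hlogbound x hx)).2; linarith
    calc f x = Real.exp (Real.log (f x)) := (Real.exp_log (hf_pos x hx)).symm
      _ ≤ Real.exp (Real.log (f 1) + M * |x - 1|) := Real.exp_le_exp.mpr h1
      _ = f 1 * Real.exp (M * |x - 1|) := by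
          rw [Real.exp_add, Real.exp_log (hf_pos 1 (Set.mem_Ioi.mpr one_pos))]
  -- f is integrable on every (0, R)
  have hint : ∀ R : ℝ, IntegrableOn f (Set.Ioo 0 R) := by
    intro R
    rcases le_or_gt R 0 with h | h
    · rw [Set.Ioo_eq_empty (by intro hc; linarith)]
      exact integrableOn_empty
    · refine Integrable.mono' (g := fun _ => f 1 * Real.exp (M * (R + 1)))
        ((integrableOn_const_iff enorm_ne_top).mpr (Or.inr measure_Ioo_lt_top))
        ((hf_cont.mono Set.Ioo_subset_Ioi_self).aestronglyMeasurable measurableSet_Ioo) ?_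
      filter_upwards [ae_restrict_mem measurableSet_Ioo] with x hx
      have hx0 : x ∈ Set.Ioi (0 : ℝ) := hx.1
      have hxb : |x - 1| ≤ R + 1 := by
        rw [abs_sub_le_iff]; constructor <;> nlinarith [hx.1, hx.2]
      have hle : f x ≤ f 1 * Real.exp (M * (R + 1)) := by
        refine le_trans (hfb x hx0) ?_
        have := Real.exp_le_exp.mpr (mul_le_mul_of_nonneg_left hxb hM.le)
        nlinarith [hf_pos 1 (Set.mem_Ioi.mpr one_pos), Real.exp_pos (M * |x - 1|)]
      rwa [Real.norm_eq_abs, abs_of_pos (hf_pos x hx0)]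
  have hintInt : ∀ R : ℝ, 0 ≤ R → IntervalIntegrable f volume 0 R := by
    intro R hR
    rw [intervalIntegrable_iff, Set.uIoc_of_le hR]
    exact (hint R).congr_set_ae Ioo_ae_eq_Ioc.symm
  have hIeq : ∀ R : ℝ, 0 ≤ R → I R = ∫ x in (0 : ℝ)..R, f x := by
    intro R hR
    rw [intervalIntegral.integral_of_le hR, integral_Ioc_eq_integral_Ioo]
  have hI_pos : ∀ R : ℝ, 0 < R → 0 < I R := by
    intro R hR
    rw [hIeq R hR.le]
    exact intervalIntegral.intervalIntegral_pos_of_pos_on (hintInt R hR.le)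
      (fun x hx => hf_pos x hx.1) hR
  have hIderiv : ∀ R : ℝ, 0 < R → HasDerivAt I (f R) R := by
    intro R hR
    have hJ : HasDerivAt (fun u => ∫ x in (0 : ℝ)..u, f x) (f R) R :=
      intervalIntegral.integral_hasDerivAt_right (hintInt R hR.le)
        (hf_cont.stronglyMeasurableAtFilter isOpen_Ioi R hR)
        (hf_cont.continuousAt (isOpen_Ioi.mem_nhds hR))
    refine hJ.congr_of_eventuallyEq ?_
    filter_upwards [isOpen_Ioi.mem_nhds hR] with u (hu : (0:ℝ) < u)
    exact hIeq u hu.le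
  -- key claim: for every ε > 0, frequently f R / I R ≤ ε
  have key : ∀ ε : ℝ, 0 < ε → ∃ᶠ R in atTop, f R / I R ≤ ε := by
    intro ε hε
    by_contra hcon
    rw [Filter.not_frequently] at hcon
    obtain ⟨R₁, hR₁⟩ := eventually_atTop.mp hcon
    set R₀ : ℝ := max R₁ 1 with hR₀def
    have hR₀pos : (0 : ℝ) < R₀ := lt_of_lt_of_le one_pos (le_max_right _ _)
    have hfI : ∀ R, R₀ ≤ R → ε * I R ≤ f R := by
      intro R hR
      have hRpos : 0 < R := lt_of_lt_of_le hR₀pos hR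
      have h1 : ¬ (f R / I R ≤ ε) := hR₁ R (le_trans (le_max_left _ _) hR)
      push_neg at h1
      exact le_of_lt ((lt_div_iff₀ (hI_pos R hRpos)).mp h1)
    set φ : ℝ → ℝ := fun R => Real.log (I R) - ε * R with hφdef
    have hφderiv : ∀ R, R₀ ≤ R → HasDerivAt φ (f R / I R - ε) R := by
      intro R hR
      have hRpos : 0 < R := lt_of_lt_of_le hR₀pos hR
      have h1 : HasDerivAt (fun y => Real.log (I y)) (f R / I R) R :=
        (hIderiv R hRpos).log (hI_pos R hRpos).ne'
      have h2 := h1.sub ((hasDerivAt_id R).const_mul ε)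
      rw [mul_one] at h2
      exact h2
    have hmono : MonotoneOn φ (Set.Ici R₀) := by
      apply monotoneOn_of_deriv_nonneg (convex_Ici R₀)
      · intro x hx
        exact (hφderiv x hx).continuousAt.continuousWithinAt
      · intro x hx
        rw [interior_Ici] at hx
        exact (hφderiv x (le_of_lt hx)).differentiableAt.differentiableWithinAt
      · intro x hx
        rw [interior_Ici] at hx
        rw [(hφderiv x (le_of_lt hx)).deriv]
        have hxpos : 0 < x := lt_trans hR₀pos hx
        have h2 : ε ≤ f x / I x := (le_div_iff₀ (hI_pos x hxpos)).mpr (hfI x (le_of_lt hx))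
        linarith
    have hgrow : ∀ R, R₀ ≤ R → Real.log (I R₀) + ε * (R - R₀) ≤ Real.log (I R) := by
      intro R hR
      have h := hmono Set.self_mem_Ici (show R ∈ Set.Ici R₀ from hR) hR
      simp only [hφdef] at h
      nlinarith
    set C : ℝ := Real.log ε + Real.log (I R₀) - ε * R₀ with hCdef
    have hlb : ∀ R, R₀ ≤ R → C / R + ε ≤ Real.log (f R) / R := by
      intro R hR
      have hRpos : 0 < R := lt_of_lt_of_le hR₀pos hR
      have h2 : Real.log (ε * I R) ≤ Real.log (f R) :=
        Real.log_le_log (mul_pos hε (hI_pos R hRpos)) (hfI R hR)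
      rw [Real.log_mul hε.ne' (hI_pos R hRpos).ne'] at h2
      have h3 := hgrow R hR
      have h4 : C + ε * R ≤ Real.log (f R) := by
        rw [hCdef]; nlinarith
      calc C / R + ε = (C + ε * R) / R := by field_simp
        _ ≤ Real.log (f R) / R := by gcongr
    have hlimC : Tendsto (fun R : ℝ => C / R + ε) atTop (𝓝 (0 + ε)) :=
      (tendsto_const_nhds.div_atTop tendsto_id).add tendsto_const_nhds
    have hfin : (0 : ℝ) + ε ≤ 0 :=
      le_of_tendsto_of_tendsto hlimC hlog (eventually_atTop.mpr ⟨R₀, hlb⟩)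
    linarith
  have hnonneg : ∀ᶠ R in atTop, 0 ≤ f R / I R := by
    filter_upwards [eventually_gt_atTop (0 : ℝ)] with R hR
    exact div_nonneg (hf_pos R hR).le (hI_pos R hR).le
  refine le_antisymm ?_ ?_
  · have h1 : ∀ ε : ℝ, 0 < ε → liminf (fun R => f R / I R) atTop ≤ ε := fun ε hε =>
      liminf_le_of_frequently_le (key ε hε) ⟨0, eventually_map.mpr hnonneg⟩
    by_contra h
    push_neg at h
    have := h1 _ (half_pos h)
    linarith
  · exact le_liminf_of_le (IsCoboundedUnder.of_frequently_le (key 1 one_pos)) hnonneg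
end

section
/- Let (Ω, μ) be a probability space and ã : Ω → ℝ a measurable function with 0 < m ≤ ã ≤ M almost everywhere. Fix p ∈ ℝ. Among all θ ∈ L²(Ω) with ∫ θ dμ = 0, the quantity ∫ ã·(p+θ)² dμ is minimized by θ₀ = p·(1/(ã·∫(1/ã)dμ) − 1), and the minimum value equals p² / ∫ (1/ã) dμ. -/
open MeasureTheory

/-- On a probability space, among zero-mean `θ ∈ L²`, the functional
`θ ↦ ∫ ã (p+θ)²` is minimized by `θ₀ = p (1/(ã ∫(1/ã)) − 1)`, with minimal
value `p² / ∫ (1/ã)`. -/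
theorem stmt_3 {Ω : Type*} [MeasurableSpace Ω] (μ : Measure Ω) [IsProbabilityMeasure μ]
    (a : Ω → ℝ) (ha_meas : Measurable a) (m M : ℝ) (hm : 0 < m) (hmM : m ≤ M)
    (hbd : ∀ᵐ ω ∂μ, m ≤ a ω ∧ a ω ≤ M) (p : ℝ) :
    let θ₀ : Ω → ℝ := fun ω => p * (1 / (a ω * ∫ ω', (1 / a ω') ∂μ) - 1)
    MemLp θ₀ 2 μ ∧ (∫ ω, θ₀ ω ∂μ) = 0 ∧
      (∫ ω, a ω * (p + θ₀ ω) ^ 2 ∂μ) = p ^ 2 / ∫ ω, (1 / a ω) ∂μ ∧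
      ∀ θ : Ω → ℝ, MemLp θ 2 μ → (∫ ω, θ ω ∂μ) = 0 →
        (∫ ω, a ω * (p + θ ω) ^ 2 ∂μ) ≥ p ^ 2 / ∫ ω, (1 / a ω) ∂μ := by
  intro θ₀
  set I : ℝ := ∫ ω, (1 / a ω) ∂μ with hIdef
  have hM : 0 < M := lt_of_lt_of_le hm hmM
  have hinv_meas : Measurable fun ω => 1 / a ω := measurable_const.div ha_meas
  have hinv_bd : ∀ᵐ ω ∂μ, ‖1 / a ω‖ ≤ 1 / m := by
    filter_upwards [hbd] with ω hω
    have ha0 : 0 < a ω := lt_of_lt_of_le hm hω.1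
    rw [Real.norm_eq_abs, abs_of_nonneg (by positivity)]
    exact one_div_le_one_div_of_le hm hω.1
  have hinv_int : Integrable (fun ω => 1 / a ω) μ :=
    memLp_one_iff_integrable.mp
      (MemLp.of_bound hinv_meas.aestronglyMeasurable (1 / m) hinv_bd)
  have hIlb : (1 : ℝ) / M ≤ I := by
    have : ∫ _ω, (1 / M : ℝ) ∂μ ≤ I := by
      apply integral_mono_ae (integrable_const _) hinv_int
      filter_upwards [hbd] with ω hω
      have ha0 : 0 < a ω := lt_of_lt_of_le hm hω.1
      exact one_div_le_one_div_of_le ha0 hω.2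
    simpa using this
  have hI : 0 < I := lt_of_lt_of_le (by positivity) hIlb
  have hInz : I ≠ 0 := ne_of_gt hI
  -- rewrite θ₀
  have hθ₀eq : θ₀ = fun ω => (p / I) * (1 / a ω) - p := by
    funext ω
    show p * (1 / (a ω * I) - 1) = (p / I) * (1 / a ω) - p
    rw [one_div (a ω * I), mul_inv]
    field_simp
  have hθ₀bd : ∀ᵐ ω ∂μ, ‖θ₀ ω‖ ≤ |p / I| * (1 / m) + |p| := by
    filter_upwards [hinv_bd] with ω hω
    rw [hθ₀eq]
    calc ‖(p / I) * (1 / a ω) - p‖ ≤ ‖(p / I) * (1 / a ω)‖ + ‖p‖ := norm_sub_le _ _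
      _ ≤ |p / I| * (1 / m) + |p| := by
          rw [norm_mul]
          gcongr <;> exact (Real.norm_eq_abs _).le
  have hθ₀meas : AEStronglyMeasurable θ₀ μ := by
    rw [hθ₀eq]
    exact ((hinv_meas.const_mul _).sub measurable_const).aestronglyMeasurable
  have hθ₀mem : MemLp θ₀ 2 μ := MemLp.of_bound hθ₀meas _ hθ₀bd
  have hconst_mul_int : Integrable (fun ω => (p / I) * (1 / a ω)) μ :=
    hinv_int.const_mul _
  have hθ₀int0 : (∫ ω, θ₀ ω ∂μ) = 0 := by
    rw [hθ₀eq]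
    rw [integral_sub hconst_mul_int (integrable_const p),
      integral_const_mul, ← hIdef, integral_const]
    simp only [measure_univ, probReal_univ, smul_eq_mul, one_mul]
    field_simp
    simp
  refine ⟨hθ₀mem, hθ₀int0, ?_, ?_⟩
  · -- value at θ₀
    have hcong : (fun ω => a ω * (p + θ₀ ω) ^ 2) =ᵐ[μ]
        fun ω => (p / I) ^ 2 * (1 / a ω) := by
      filter_upwards [hbd] with ω hω
      have ha0 : a ω ≠ 0 := ne_of_gt (lt_of_lt_of_le hm hω.1)
      show a ω * (p + p * (1 / (a ω * I) - 1)) ^ 2 = (p / I) ^ 2 * (1 / a ω)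
      field_simp
      ring
    rw [integral_congr_ae hcong, integral_const_mul, ← hIdef]
    field_simp
  · -- minimality
    intro θ hθ hθ0
    have hθint : Integrable θ μ := hθ.integrable (by norm_num)
    have hpθint : Integrable (fun ω => p + θ ω) μ := (integrable_const p).add hθint
    have hpθ : MemLp (fun ω => p + θ ω) 2 μ := (memLp_const p).add hθ
    have hsq : Integrable (fun ω => (p + θ ω) ^ 2) μ := hpθ.integrable_sq
    have habd : ∀ᵐ ω ∂μ, ‖a ω‖ ≤ M := by
      filter_upwards [hbd] with ω hω
      rw [Real.norm_eq_abs, abs_of_nonneg (le_of_lt (lt_of_lt_of_le hm hω.1))]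
      exact hω.2
    have hintA : Integrable (fun ω => a ω * (p + θ ω) ^ 2) μ :=
      hsq.bdd_mul ha_meas.aestronglyMeasurable habd
    have h1 : Integrable (fun ω => (2 * p / I) * (p + θ ω)) μ := hpθint.const_mul _
    have h2 : Integrable (fun ω => (p ^ 2 / I ^ 2) * (1 / a ω)) μ :=
      hinv_int.const_mul _
    have hintB : Integrable
        (fun ω => (2 * p / I) * (p + θ ω) - (p ^ 2 / I ^ 2) * (1 / a ω)) μ :=
      h1.sub h2
    have hptwise : ∀ᵐ ω ∂μ,
        (2 * p / I) * (p + θ ω) - (p ^ 2 / I ^ 2) * (1 / a ω) ≤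
          a ω * (p + θ ω) ^ 2 := by
      filter_upwards [hbd] with ω hω
      have ha0 : 0 < a ω := lt_of_lt_of_le hm hω.1
      have hne : a ω ≠ 0 := ne_of_gt ha0
      have key : a ω * (p + θ ω) ^ 2 -
          ((2 * p / I) * (p + θ ω) - (p ^ 2 / I ^ 2) * (1 / a ω)) =
          (1 / a ω) * (a ω * (p + θ ω) - p / I) ^ 2 := by
        field_simp
        ring
      have hnn : 0 ≤ (1 / a ω) * (a ω * (p + θ ω) - p / I) ^ 2 :=
        mul_nonneg (by positivity) (sq_nonneg _)
      linarith [key ▸ hnn]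
    have hmono := integral_mono_ae hintB hintA hptwise
    have hB : (∫ ω, ((2 * p / I) * (p + θ ω) - (p ^ 2 / I ^ 2) * (1 / a ω)) ∂μ)
        = p ^ 2 / I := by
      rw [integral_sub h1 h2, integral_const_mul, integral_const_mul,
        integral_add (integrable_const p) hθint, integral_const, hθ0, ← hIdef]
      simp only [measure_univ, probReal_univ, smul_eq_mul, one_mul, add_zero]
      field_simp
      ring
    rw [hB] at hmono
    exact hmono
end

section
/- Let (Ω, μ) be a probability space, ã : Ω → ℝ measurable with 0 < m ≤ ã ≤ M a.e., p ∈ ℝ, p ≠ 0. If θ ∈ L²(Ω) satisfies ∫θ dμ = 0 and ∫ ã(p+θ)² dμ = p²/∫(1/ã)dμ, then θ = p·(1/(ã·∫(1/ã)dμ) − 1) almost everywhere. In particular, if ã is a.e. constant, then θ = 0 almost everywhere. -/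
open MeasureTheory

/-- Uniqueness of the minimizer: if a zero-mean `θ ∈ L²` achieves the minimal value
`p²/∫(1/ã)` of `θ ↦ ∫ ã (p+θ)²` with `p ≠ 0`, then `θ = p (1/(ã ∫(1/ã)) − 1)` a.e.;
in particular if `ã` is a.e. constant then `θ = 0` a.e. -/
theorem stmt_4 {Ω : Type*} [MeasurableSpace Ω] (μ : Measure Ω) [IsProbabilityMeasure μ]
    (a : Ω → ℝ) (ha_meas : Measurable a) (m M : ℝ) (hm : 0 < m) (hmM : m ≤ M)
    (hbd : ∀ᵐ ω ∂μ, m ≤ a ω ∧ a ω ≤ M) (p : ℝ) (hp : p ≠ 0)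
    (θ : Ω → ℝ) (hθ : MemLp θ 2 μ) (hmean : (∫ ω, θ ω ∂μ) = 0)
    (hmin : (∫ ω, a ω * (p + θ ω) ^ 2 ∂μ) = p ^ 2 / ∫ ω, (1 / a ω) ∂μ) :
    (θ =ᵐ[μ] fun ω => p * (1 / (a ω * ∫ ω', (1 / a ω') ∂μ) - 1)) ∧
      ∀ a₀ : ℝ, (a =ᵐ[μ] fun _ => a₀) → θ =ᵐ[μ] fun _ => (0 : ℝ) := by
  have hapos : ∀ᵐ ω ∂μ, 0 < a ω := hbd.mono fun ω h => lt_of_lt_of_le hm h.1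
  have hMpos : 0 < M := lt_of_lt_of_le hm hmM
  set c : ℝ := ∫ ω, (1 / a ω) ∂μ with hc
  have hinv_meas : Measurable fun ω => 1 / a ω := measurable_const.div ha_meas
  have hinv_int : Integrable (fun ω => 1 / a ω) μ := by
    apply Integrable.mono' (integrable_const (1/m)) hinv_meas.aestronglyMeasurable
    filter_upwards [hbd, hapos] with ω h hω
    rw [Real.norm_eq_abs, abs_of_nonneg (by positivity)]
    exact one_div_le_one_div_of_le hm h.1
  have hc_pos : 0 < c := by
    have h1 : (1/M : ℝ) ≤ c := by
      have : (1/M : ℝ) = ∫ _, (1/M : ℝ) ∂μ := by simp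
      rw [this]
      refine integral_mono_ae (integrable_const _) hinv_int ?_
      filter_upwards [hbd, hapos] with ω h hω
      exact one_div_le_one_div_of_le hω h.2
    linarith [one_div_pos.mpr hMpos]
  -- integrabilities
  have hθ_int : Integrable θ μ := hθ.integrable one_le_two
  have hsum : MemLp (fun ω => p + θ ω) 2 μ := (memLp_const p).add hθ
  have hsumsq_int : Integrable (fun ω => (p + θ ω) ^ 2) μ := by
    have := hsum.integrable_sq
    simpa using this
  have hsum_int : Integrable (fun ω => p + θ ω) μ := (integrable_const p).add hθ_int
  have hasum_int : Integrable (fun ω => a ω * (p + θ ω) ^ 2) μ := by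
    refine hsumsq_int.bdd_mul (c := M) ha_meas.aestronglyMeasurable ?_
    filter_upwards [hbd, hapos] with ω h hω
    rw [Real.norm_eq_abs, abs_of_pos hω]; exact h.2
  have hsum_integral : ∫ ω, (p + θ ω) ∂μ = p := by
    rw [integral_add (integrable_const p) hθ_int, hmean]; simp
  -- the key vanishing integral
  have key : ∫ ω, a ω * (p + θ ω - p / (c * a ω)) ^ 2 ∂μ = 0 := by
    have heq : (fun ω => a ω * (p + θ ω - p / (c * a ω)) ^ 2)
        =ᵐ[μ] fun ω => a ω * (p + θ ω) ^ 2 - (2 * p / c) * (p + θ ω)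
          + (p ^ 2 / c ^ 2) * (1 / a ω) := by
      filter_upwards [hapos] with ω hω
      have haω : a ω ≠ 0 := ne_of_gt hω
      field_simp
      ring
    have hA : Integrable (fun ω => a ω * (p + θ ω) ^ 2 - (2 * p / c) * (p + θ ω)) μ :=
      hasum_int.sub (hsum_int.const_mul _)
    have hB : Integrable (fun ω => (p ^ 2 / c ^ 2) * (1 / a ω)) μ := hinv_int.const_mul _
    rw [integral_congr_ae heq, integral_add hA hB,
      integral_sub hasum_int (hsum_int.const_mul _),
      integral_const_mul, integral_const_mul, hsum_integral, hmin, ← hc]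
    field_simp
    ring
  have hnn : 0 ≤ᵐ[μ] fun ω => a ω * (p + θ ω - p / (c * a ω)) ^ 2 := by
    filter_upwards [hapos] with ω hω
    positivity
  have hint0 : Integrable (fun ω => a ω * (p + θ ω - p / (c * a ω)) ^ 2) μ := by
    have heq : (fun ω => a ω * (p + θ ω - p / (c * a ω)) ^ 2)
        =ᵐ[μ] fun ω => a ω * (p + θ ω) ^ 2 - (2 * p / c) * (p + θ ω)
          + (p ^ 2 / c ^ 2) * (1 / a ω) := by
      filter_upwards [hapos] with ω hω
      have haω : a ω ≠ 0 := ne_of_gt hω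
      field_simp
      ring
    have hA : Integrable (fun ω => a ω * (p + θ ω) ^ 2 - (2 * p / c) * (p + θ ω)) μ :=
      hasum_int.sub (hsum_int.const_mul _)
    have hB : Integrable (fun ω => (p ^ 2 / c ^ 2) * (1 / a ω)) μ := hinv_int.const_mul _
    exact (hA.add hB).congr heq.symm
  have hzero : (fun ω => a ω * (p + θ ω - p / (c * a ω)) ^ 2) =ᵐ[μ] 0 :=
    (integral_eq_zero_iff_of_nonneg_ae hnn hint0).mp key
  have h1 : θ =ᵐ[μ] fun ω => p * (1 / (a ω * c) - 1) := by
    filter_upwards [hzero, hapos] with ω h0 hω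
    have haω : a ω ≠ 0 := ne_of_gt hω
    have hsq : (p + θ ω - p / (c * a ω)) ^ 2 = 0 := by
      rcases mul_eq_zero.mp h0 with h | h
      · exact absurd h haω
      · exact h
    have h2 : p + θ ω - p / (c * a ω) = 0 := by
      exact pow_eq_zero_iff (n := 2) (by norm_num) |>.mp hsq
    have hθω : θ ω = p / (c * a ω) - p := by linarith
    rw [hθω]
    field_simp
  refine ⟨h1, fun a₀ ha₀ => ?_⟩
  obtain ⟨ω₀, hω₀, hω₀'⟩ := (ha₀.and hbd).exists
  have ha₀m : m ≤ a₀ := hω₀'.1.trans_eq hω₀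
  have ha₀pos : (0:ℝ) < a₀ := lt_of_lt_of_le hm ha₀m
  have hc_eq : c = 1 / a₀ := by
    rw [hc, integral_congr_ae (ha₀.mono fun ω h => by rw [h])]
    simp
  refine h1.trans ?_
  filter_upwards [ha₀] with ω h
  rw [h, hc_eq]
  have : a₀ * (1 / a₀) = 1 := mul_one_div_cancel (ne_of_gt ha₀pos)
  rw [this]
  simp
end

section
/- For a probability space (Ω, μ) and measurable ã with 0 < m ≤ ã ≤ M a.e., the harmonic mean bound holds: for every zero-mean θ ∈ L²(Ω) and every p ∈ ℝ, ∫ ã·(p+θ)² dμ ≥ p² / ∫ (1/ã) dμ. Consequently ∫ ã·(p+θ)² dμ ≥ p²·m and, if ã is constant equal to a₀, ∫ a₀·(p+θ)² dμ ≥ a₀·p² with equality iff θ = 0 a.e. -/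
open MeasureTheory

/-- Harmonic mean bound: for zero-mean `θ ∈ L²`, `∫ ã (p+θ)² ≥ p²/∫(1/ã) ≥ p² m`;
and if `ã ≡ a₀` then `∫ a₀ (p+θ)² ≥ a₀ p²` with equality iff `θ = 0` a.e. -/
theorem stmt_5 {Ω : Type*} [MeasurableSpace Ω] (μ : Measure Ω) [IsProbabilityMeasure μ]
    (a : Ω → ℝ) (ha_meas : Measurable a) (m M : ℝ) (hm : 0 < m) (hmM : m ≤ M)
    (hbd : ∀ᵐ ω ∂μ, m ≤ a ω ∧ a ω ≤ M) (p : ℝ)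
    (θ : Ω → ℝ) (hθ : MemLp θ 2 μ) (hmean : (∫ ω, θ ω ∂μ) = 0) :
    (∫ ω, a ω * (p + θ ω) ^ 2 ∂μ) ≥ p ^ 2 / ∫ ω, (1 / a ω) ∂μ ∧
      (∫ ω, a ω * (p + θ ω) ^ 2 ∂μ) ≥ p ^ 2 * m ∧
      ∀ a₀ : ℝ, (a =ᵐ[μ] fun _ => a₀) →
        (∫ ω, a₀ * (p + θ ω) ^ 2 ∂μ) ≥ a₀ * p ^ 2 ∧
          ((∫ ω, a₀ * (p + θ ω) ^ 2 ∂μ) = a₀ * p ^ 2 ↔ θ =ᵐ[μ] fun _ => (0 : ℝ)) := by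
  have hMpos : 0 < M := hm.trans_le hmM
  -- basic integrability
  have hθ1 : Integrable θ μ := hθ.integrable (by norm_num)
  have hθsq : Integrable (fun ω => θ ω ^ 2) μ := hθ.integrable_sq
  have hsq : Integrable (fun ω => (p + θ ω) ^ 2) μ := by
    have h := ((integrable_const (p ^ 2)).add (hθ1.const_mul (2 * p))).add hθsq
    refine h.congr (Filter.Eventually.of_forall fun ω => ?_)
    simp; ring
  have hInt_a : Integrable (fun ω => a ω * (p + θ ω) ^ 2) μ :=
    hsq.bdd_mul (c := M) ha_meas.aestronglyMeasurable
      (by filter_upwards [hbd] with ω h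
          rw [Real.norm_eq_abs, abs_le]
          constructor <;> nlinarith [h.1, h.2])
  have hInv_int : Integrable (fun ω => 1 / a ω) μ := by
    refine MemLp.integrable le_top (memLp_top_of_bound
      (ha_meas.aemeasurable.const_div 1).aestronglyMeasurable (1 / m) ?_)
    filter_upwards [hbd] with ω h
    rw [Real.norm_eq_abs, abs_le]
    constructor
    · have : 0 < a ω := hm.trans_le h.1
      have : 0 ≤ 1 / a ω := by positivity
      linarith [one_div_pos.mpr hm]
    · exact one_div_le_one_div_of_le hm h.1
  -- key expansion
  have hθsq_nonneg : 0 ≤ ∫ ω, θ ω ^ 2 ∂μ := integral_nonneg fun ω => sq_nonneg _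
  have hg2 : Integrable (fun ω => 2 * p * θ ω + θ ω ^ 2) μ :=
    (hθ1.const_mul (2 * p)).add hθsq
  have key : (∫ ω, (p + θ ω) ^ 2 ∂μ) = p ^ 2 + ∫ ω, θ ω ^ 2 ∂μ := by
    have h1 : (∫ ω, (p + θ ω) ^ 2 ∂μ)
        = ∫ ω, (p ^ 2 + (2 * p * θ ω + θ ω ^ 2)) ∂μ := by
      congr 1; funext ω; ring
    rw [h1, integral_add (integrable_const _) hg2,
      integral_add (hθ1.const_mul (2 * p)) hθsq, integral_const_mul, hmean,
      integral_const]
    simp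
  set A := ∫ ω, a ω * (p + θ ω) ^ 2 ∂μ with hA
  set B := ∫ ω, (1 / a ω) ∂μ with hBdef
  -- B bounds
  have hBge : 1 / M ≤ B := by
    have hmono : (∫ _ω, (1 / M) ∂μ) ≤ B := by
      refine integral_mono_ae (integrable_const _) hInv_int ?_
      filter_upwards [hbd] with ω h
      exact one_div_le_one_div_of_le (hm.trans_le h.1) h.2
    simpa using hmono
  have hBpos : 0 < B := lt_of_lt_of_le (by positivity) hBge
  -- second claim
  have hA2 : A ≥ p ^ 2 * m := by
    have h1 : m * (∫ ω, (p + θ ω) ^ 2 ∂μ) ≤ A := by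
      rw [hA, ← integral_const_mul]
      refine integral_mono_ae (hsq.const_mul m) hInt_a ?_
      filter_upwards [hbd] with ω h
      exact mul_le_mul_of_nonneg_right h.1 (sq_nonneg _)
    rw [key] at h1
    nlinarith
  have hApos : 0 ≤ A := le_trans (by positivity) hA2
  -- first claim
  have h1 : A ≥ p ^ 2 / B := by
    rcases eq_or_ne p 0 with hp | hp
    · simpa [hp] using hApos
    · have hAgt : 0 < A := lt_of_lt_of_le (by positivity) hA2
      set t := Real.sqrt (B / A) with ht
      have htpos : 0 < t := Real.sqrt_pos.mpr (by positivity)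
      have ht2 : t ^ 2 * A = B := by
        rw [ht, Real.sq_sqrt (by positivity : (0:ℝ) ≤ B / A)]
        field_simp
      -- pointwise AM-GM
      have hptwise : ∀ᵐ ω ∂μ,
          |p + θ ω| ≤ (t * (a ω * (p + θ ω) ^ 2) + (1 / a ω) / t) / 2 := by
        filter_upwards [hbd] with ω h
        have hapos : 0 < a ω := hm.trans_le h.1
        have h2 : (1 / a ω) / t = 1 / (a ω * t) := by
          rw [div_div, one_div]
        rw [h2]
        have hat : 0 < a ω * t := mul_pos hapos htpos
        rw [le_div_iff₀ (by norm_num : (0:ℝ) < 2), ← sq_abs (p + θ ω)]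
        have hkey : (a ω * t * |p + θ ω| - 1) ^ 2 ≥ 0 := sq_nonneg _
        have hinv : a ω * t * (1 / (a ω * t)) = 1 := by field_simp
        have hu : 0 < 1 / (a ω * t) := by positivity
        nlinarith [abs_nonneg (p + θ ω), hat, hkey, hinv, hu]
      have habs_int : Integrable (fun ω => |p + θ ω|) μ :=
        ((integrable_const p).add hθ1).abs
      have hRHS_int : Integrable
          (fun ω => (t * (a ω * (p + θ ω) ^ 2) + (1 / a ω) / t) / 2) μ :=
        (((hInt_a.const_mul t).add (hInv_int.div_const t)).div_const 2)
      have hint_le : (∫ ω, |p + θ ω| ∂μ)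
          ≤ (t * A + B / t) / 2 := by
        have := integral_mono_ae habs_int hRHS_int hptwise
        rw [integral_div, integral_add (hInt_a.const_mul t) (hInv_int.div_const t),
          integral_const_mul, integral_div] at this
        exact this
      have hpabs : |p| ≤ (t * A + B / t) / 2 := by
        have hip : (∫ ω, (p + θ ω) ∂μ) = p := by
          rw [integral_add (integrable_const p) hθ1, hmean, integral_const]
          simp
        calc |p| = |∫ ω, (p + θ ω) ∂μ| := by rw [hip]
          _ ≤ ∫ ω, |p + θ ω| ∂μ := by
              simpa [Real.norm_eq_abs] using
                norm_integral_le_integral_norm (f := fun ω => p + θ ω) (μ := μ)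
          _ ≤ _ := hint_le
      have hBt : B / t = t * A := by
        rw [← ht2]; field_simp
      rw [hBt] at hpabs
      have hpabs2 : |p| ≤ t * A := by linarith
      have : p ^ 2 ≤ A * B := by
        have hmul := mul_self_le_mul_self (abs_nonneg p) hpabs2
        nlinarith [sq_abs p, ht2]
      rw [ge_iff_le, div_le_iff₀ hBpos]
      exact this
  refine ⟨h1, hA2, fun a₀ ha₀ => ?_⟩
  -- get m ≤ a₀
  have hma₀ : m ≤ a₀ := by
    have hae : ∀ᵐ ω ∂μ, m ≤ a₀ := by
      filter_upwards [hbd, ha₀] with ω h he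
      rw [← he]; exact h.1
    have hne : μ ≠ 0 := IsProbabilityMeasure.ne_zero μ
    haveI : (ae μ).NeBot := ae_neBot.mpr hne
    obtain ⟨ω, hω⟩ := hae.exists
    exact hω
  have ha₀pos : 0 < a₀ := hm.trans_le hma₀
  have hval : (∫ ω, a₀ * (p + θ ω) ^ 2 ∂μ) = a₀ * (p ^ 2 + ∫ ω, θ ω ^ 2 ∂μ) := by
    rw [integral_const_mul, key]
  constructor
  · rw [hval]; nlinarith
  · rw [hval]
    constructor
    · intro h
      have hI : (∫ ω, θ ω ^ 2 ∂μ) = 0 := by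
        have := mul_left_cancel₀ (ne_of_gt ha₀pos)
          (h.trans (by ring : a₀ * p ^ 2 = a₀ * (p ^ 2 + 0)))
        linarith [this]
      have := (integral_eq_zero_iff_of_nonneg_ae
        (Filter.Eventually.of_forall fun ω => sq_nonneg (θ ω)) hθsq).mp hI
      filter_upwards [this] with ω hω
      have : θ ω ^ 2 = 0 := hω
      exact pow_eq_zero_iff (by norm_num) |>.mp this
    · intro h
      have hI : (∫ ω, θ ω ^ 2 ∂μ) = 0 := by
        rw [integral_eq_zero_iff_of_nonneg_ae
          (Filter.Eventually.of_forall fun ω => sq_nonneg (θ ω)) hθsq]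
        filter_upwards [h] with ω hω
        simp [hω]
      rw [hI]; ring
end

section
/- Let φ, ψ : ℝ → (0,∞) be C² functions and a : ℝ → (0,∞) be C¹. Define α = √(φψ) and θ = −φ'/(2φ) + ψ'/(2ψ). Suppose for constants p, λ, and functions c : ℝ → ℝ: (aφ')' − 2pa·φ' + (c + p²a − pa')φ = λφ and (aψ')' + 2pa·ψ' + (c + p²a + pa')ψ = λψ on ℝ. Then (aα')' + (c + a(p+θ)²)α = λα on ℝ. -/
private lemma key_alg (A A' P P' P'' Q Q' Q'' C al p lam : ℝ)
    (hP : P ≠ 0) (hQ : Q ≠ 0) (hal : al ≠ 0) (hsq : al ^ 2 = P * Q)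
    (h1 : A' * P' + A * P'' - 2 * p * A * P' + (C + p ^ 2 * A - p * A') * P = lam * P)
    (h2 : A' * Q' + A * Q'' + 2 * p * A * Q' + (C + p ^ 2 * A + p * A') * Q = lam * Q) :
    ((A' * (P' * Q + P * Q') + A * ((P'' * Q + P' * Q') + (P' * Q' + P * Q''))) * (2 * al)
        - (A * (P' * Q + P * Q')) * (2 * ((P' * Q + P * Q') / (2 * al)))) / (2 * al) ^ 2
      + (C + A * (p + (-P' / (2 * P) + Q' / (2 * Q))) ^ 2) * al = lam * al := by
  have h4 : al ^ 4 = (P * Q) ^ 2 := by rw [show (4:ℕ) = 2*2 by rfl, pow_mul, hsq]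
  field_simp
  linear_combination (2*P^2*Q^3*al^2)*h1 + (2*P^3*Q^2*al^2)*h2
    + (4*P^2*Q^2*al^2*(C+A*p^2-lam) + 4*P*Q*al^2*A*p*(P*Q'-P'*Q)
      + 4*P^2*Q^2*A*P'*Q' + 1*A*(P*Q'-P'*Q)^2*(al^2+P*Q))*hsq

/-- The pair of conjugate eigenfunction equations for `L_p` and `L_{-p}` yields the
self-adjoint equation `(aα')' + (c + a(p+θ)²)α = λα` for `α = √(φψ)`,
`θ = −φ'/(2φ) + ψ'/(2ψ)`. -/
theorem stmt_13 (a c φ ψ α θ : ℝ → ℝ) (p lam : ℝ)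
    (ha : ContDiff ℝ 1 a) (ha_pos : ∀ x, 0 < a x)
    (hφ : ContDiff ℝ 2 φ) (hφ_pos : ∀ x, 0 < φ x)
    (hψ : ContDiff ℝ 2 ψ) (hψ_pos : ∀ x, 0 < ψ x)
    (hc : Continuous c)
    (hα : ∀ x, α x = Real.sqrt (φ x * ψ x))
    (hθ : ∀ x, θ x = -(deriv φ x) / (2 * φ x) + deriv ψ x / (2 * ψ x))
    (heqφ : ∀ x, deriv (fun y => a y * deriv φ y) x - 2 * p * a x * deriv φ x
      + (c x + p ^ 2 * a x - p * deriv a x) * φ x = lam * φ x)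
    (heqψ : ∀ x, deriv (fun y => a y * deriv ψ y) x + 2 * p * a x * deriv ψ x
      + (c x + p ^ 2 * a x + p * deriv a x) * ψ x = lam * ψ x) :
    ∀ x, deriv (fun y => a y * deriv α y) x + (c x + a x * (p + θ x) ^ 2) * α x
      = lam * α x := by
  have hφd : Differentiable ℝ φ := hφ.differentiable (by norm_num)
  have hψd : Differentiable ℝ ψ := hψ.differentiable (by norm_num)
  have had : Differentiable ℝ a := ha.differentiable (by norm_num)
  have hφ'd : Differentiable ℝ (deriv φ) :=
    ((contDiff_succ_iff_deriv.mp (by exact_mod_cast hφ : ContDiff ℝ (1+1) φ)).2.2).differentiable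
      (by norm_num)
  have hψ'd : Differentiable ℝ (deriv ψ) :=
    ((contDiff_succ_iff_deriv.mp (by exact_mod_cast hψ : ContDiff ℝ (1+1) ψ)).2.2).differentiable
      (by norm_num)
  have hα_pos : ∀ x, 0 < α x := by
    intro x; rw [hα]; exact Real.sqrt_pos.mpr (mul_pos (hφ_pos x) (hψ_pos x))
  have hα_sq : ∀ x, α x ^ 2 = φ x * ψ x := by
    intro x; rw [hα]; exact Real.sq_sqrt (mul_pos (hφ_pos x) (hψ_pos x)).le
  -- derivative of α
  have hαder : ∀ y, HasDerivAt α ((deriv φ y * ψ y + φ y * deriv ψ y) / (2 * α y)) y := by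
    intro y
    have h1 : HasDerivAt (fun z => φ z * ψ z) (deriv φ y * ψ y + φ y * deriv ψ y) y :=
      ((hφd y).hasDerivAt).mul ((hψd y).hasDerivAt)
    have h2 := h1.sqrt (ne_of_gt (mul_pos (hφ_pos y) (hψ_pos y)))
    have hfun : α = fun z => Real.sqrt (φ z * ψ z) := funext hα
    rw [hfun]
    simpa [← hα y] using h2
  have hfun_eq : (fun y => a y * deriv α y)
      = fun y => (a y * (deriv φ y * ψ y + φ y * deriv ψ y)) / (2 * α y) := by
    funext y
    rw [(hαder y).deriv]
    ring
  intro x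
  rw [hfun_eq, hθ]
  -- compute the derivative of the quotient
  have hNum : HasDerivAt (fun y => a y * (deriv φ y * ψ y + φ y * deriv ψ y))
      (deriv a x * (deriv φ x * ψ x + φ x * deriv ψ x)
        + a x * ((deriv (deriv φ) x * ψ x + deriv φ x * deriv ψ x)
          + (deriv φ x * deriv ψ x + φ x * deriv (deriv ψ) x))) x := by
    exact ((had x).hasDerivAt).mul
      ((((hφ'd x).hasDerivAt).mul ((hψd x).hasDerivAt)).add
        (((hφd x).hasDerivAt).mul ((hψ'd x).hasDerivAt)))
  have hDen : HasDerivAt (fun y => 2 * α y)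
      (2 * ((deriv φ x * ψ x + φ x * deriv ψ x) / (2 * α x))) x :=
    (hαder x).const_mul 2
  have hdiv := hNum.div hDen (by have := hα_pos x; positivity)
  rw [(show HasDerivAt (fun y => a y * (deriv φ y * ψ y + φ y * deriv ψ y) / (2 * α y)) _ x from hdiv).deriv]
  -- rewrite the second-derivative terms using the hypotheses
  have hAφ : HasDerivAt (fun y => a y * deriv φ y)
      (deriv a x * deriv φ x + a x * deriv (deriv φ) x) x :=
    ((had x).hasDerivAt).mul ((hφ'd x).hasDerivAt)
  have hAψ : HasDerivAt (fun y => a y * deriv ψ y)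
      (deriv a x * deriv ψ x + a x * deriv (deriv ψ) x) x :=
    ((had x).hasDerivAt).mul ((hψ'd x).hasDerivAt)
  have h1 := heqφ x
  have h2 := heqψ x
  rw [hAφ.deriv] at h1
  rw [hAψ.deriv] at h2
  have := key_alg (a x) (deriv a x) (φ x) (deriv φ x) (deriv (deriv φ) x)
    (ψ x) (deriv ψ x) (deriv (deriv ψ) x) (c x) (α x) p lam
    (ne_of_gt (hφ_pos x)) (ne_of_gt (hψ_pos x)) (ne_of_gt (hα_pos x)) (hα_sq x)
    (by linarith) (by linarith)
  convert this using 2 <;> ring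
end

section
/- Let a, φ : ℝ → ℝ with a ∈ C¹, a > 0 bounded, φ ∈ C² positive, φ'/φ bounded, and suppose (aφ')' + cφ ≤ λφ on ℝ for a continuous bounded function c and constant λ. Then for every R > 0: 2Rλ ≥ a(R)φ'(R)/φ(R) − a(−R)φ'(−R)/φ(−R) + ∫_{−R}^{R} a(x)(φ'(x)/φ(x))² dx + ∫_{−R}^{R} c(x) dx. Consequently, if (1/(2R))∫_{−R}^{R} c(x)dx → c̄ as R → ∞, then λ ≥ c̄. -/
open Filter Topology intervalIntegral

/-- Integration of the inequality `(aφ')' + cφ ≤ λφ` divided by `φ`: for every `R > 0`,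
`2Rλ ≥ [aφ'/φ]_{-R}^R + ∫_{-R}^R a(φ'/φ)² + ∫_{-R}^R c`; consequently, if the averages
of `c` converge to `c̄`, then `λ ≥ c̄`. -/
theorem stmt_16 (a c φ : ℝ → ℝ) (lam A₀ M C₀ : ℝ)
    (ha : ContDiff ℝ 1 a) (ha_pos : ∀ x, 0 < a x) (ha_bd : ∀ x, a x ≤ A₀)
    (hφ : ContDiff ℝ 2 φ) (hφ_pos : ∀ x, 0 < φ x)
    (hφ_log : ∀ x, |deriv φ x / φ x| ≤ M)
    (hc : Continuous c) (hc_bd : ∀ x, |c x| ≤ C₀)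
    (hineq : ∀ x, deriv (fun y => a y * deriv φ y) x + c x * φ x ≤ lam * φ x) :
    (∀ R > (0 : ℝ),
      2 * R * lam ≥ a R * deriv φ R / φ R - a (-R) * deriv φ (-R) / φ (-R)
        + (∫ x in (-R)..R, a x * (deriv φ x / φ x) ^ 2)
        + ∫ x in (-R)..R, c x) ∧
      ∀ cbar : ℝ,
        Tendsto (fun R => (1 / (2 * R)) * ∫ x in (-R)..R, c x) atTop (𝓝 cbar) →
        lam ≥ cbar := by
  have hφd : Differentiable ℝ φ := hφ.differentiable (by norm_num)
  have hφ' : ContDiff ℝ 1 (deriv φ) := by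
    have : ContDiff ℝ ((1:ℕ)+1) φ := by exact_mod_cast hφ
    exact (contDiff_succ_iff_deriv.mp this).2.2
  have had : Differentiable ℝ a := ha.differentiable one_ne_zero
  have haφ : ContDiff ℝ 1 (fun y => a y * deriv φ y) := ha.mul hφ'
  have hder_cont : Continuous (deriv fun y => a y * deriv φ y) := by
    have : ContDiff ℝ ((0:ℕ)+1) (fun y => a y * deriv φ y) := by exact_mod_cast haφ
    exact ((contDiff_succ_iff_deriv.mp this).2.2).continuous
  set g : ℝ → ℝ := fun x => a x * deriv φ x / φ x with hg
  have hg_diff : ∀ x, DifferentiableAt ℝ g x := fun x =>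
    ((had x).mul (hφ'.differentiable one_ne_zero x)).div (hφd x) (hφ_pos x).ne'
  have hderiv_g : ∀ x, deriv g x
      = deriv (fun y => a y * deriv φ y) x / φ x - a x * (deriv φ x / φ x) ^ 2 := by
    intro x
    have : deriv (fun y => a y * deriv φ y / φ y) x = (deriv (fun y => a y * deriv φ y) x * φ x - a x * deriv φ x * deriv φ x) / φ x ^ 2 := deriv_div ((had x).mul (hφ'.differentiable one_ne_zero x)) (hφd x) (hφ_pos x).ne'
    rw [hg, this]
    field_simp [(hφ_pos x).ne']
  have hcg : Continuous (deriv g) := by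
    have : deriv g = fun x =>
        deriv (fun y => a y * deriv φ y) x / φ x - a x * (deriv φ x / φ x) ^ 2 :=
      funext hderiv_g
    rw [this]
    exact (hder_cont.div hφd.continuous (fun x => (hφ_pos x).ne')).sub
      (ha.continuous.mul ((hφ'.continuous.div hφd.continuous (fun x => (hφ_pos x).ne')).pow 2))
  have hkey : ∀ x, deriv g x + a x * (deriv φ x / φ x) ^ 2 + c x ≤ lam := by
    intro x
    have h1 := hineq x
    have h2 : deriv (fun y => a y * deriv φ y) x / φ x ≤ lam - c x := by
      rw [div_le_iff₀ (hφ_pos x)]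
      nlinarith [hφ_pos x]
    rw [hderiv_g x]
    linarith
  have hcont2 : Continuous (fun x => a x * (deriv φ x / φ x) ^ 2) :=
    ha.continuous.mul ((hφ'.continuous.div hφd.continuous (fun x => (hφ_pos x).ne')).pow 2)
  have main : ∀ R > (0 : ℝ),
      2 * R * lam ≥ a R * deriv φ R / φ R - a (-R) * deriv φ (-R) / φ (-R)
        + (∫ x in (-R)..R, a x * (deriv φ x / φ x) ^ 2)
        + ∫ x in (-R)..R, c x := by
    intro R hR
    have hRle : (-R : ℝ) ≤ R := by linarith
    have i1 : IntervalIntegrable (deriv g) MeasureTheory.volume (-R) R :=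
      hcg.intervalIntegrable _ _
    have i2 : IntervalIntegrable (fun x => a x * (deriv φ x / φ x) ^ 2)
        MeasureTheory.volume (-R) R := hcont2.intervalIntegrable _ _
    have i3 : IntervalIntegrable c MeasureTheory.volume (-R) R := hc.intervalIntegrable _ _
    have hmono : (∫ x in (-R)..R, (deriv g x + a x * (deriv φ x / φ x) ^ 2 + c x))
        ≤ ∫ x in (-R)..R, lam := by
      apply intervalIntegral.integral_mono_on hRle ((i1.add i2).add i3)
        (intervalIntegrable_const)
      intro x _
      exact hkey x
    rw [intervalIntegral.integral_const, intervalIntegral.integral_add (i1.add i2) i3,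
      intervalIntegral.integral_add i1 i2,
      intervalIntegral.integral_deriv_eq_sub (fun x _ => hg_diff x) i1] at hmono
    have : (R - -R) • lam = 2 * R * lam := by rw [smul_eq_mul]; ring
    rw [this] at hmono
    simpa [hg] using hmono
  refine ⟨main, ?_⟩
  intro cbar htend
  have hM0 : 0 ≤ M := le_trans (abs_nonneg _) (hφ_log 0)
  have hA0 : 0 < A₀ := lt_of_lt_of_le (ha_pos 0) (ha_bd 0)
  have hbd : ∀ x, |a x * deriv φ x / φ x| ≤ A₀ * M := by
    intro x
    rw [mul_div_assoc, abs_mul]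
    apply mul_le_mul _ (hφ_log x) (abs_nonneg _) hA0.le
    rw [abs_of_pos (ha_pos x)]; exact ha_bd x
  have hlow : ∀ R > (0 : ℝ),
      1 / (2 * R) * (∫ x in (-R)..R, c x) - A₀ * M / R ≤ lam := by
    intro R hR
    have hRle : (-R : ℝ) ≤ R := by linarith
    have h2R : (0:ℝ) < 2 * R := by linarith
    have hpos : 0 ≤ ∫ x in (-R)..R, a x * (deriv φ x / φ x) ^ 2 := by
      apply intervalIntegral.integral_nonneg hRle
      intro x _
      exact mul_nonneg (ha_pos x).le (sq_nonneg _)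
    have h1 := main R hR
    have hb1 := abs_le.mp (hbd R)
    have hb2 := abs_le.mp (hbd (-R))
    have heq : 1 / (2 * R) * (∫ x in (-R)..R, c x) - A₀ * M / R
        = ((∫ x in (-R)..R, c x) - 2 * (A₀ * M)) / (2 * R) := by
      field_simp
    rw [heq, div_le_iff₀ h2R]
    linarith
  have hzero : Tendsto (fun R : ℝ => A₀ * M / R) atTop (𝓝 0) :=
    Tendsto.div_atTop tendsto_const_nhds tendsto_id
  have hT : Tendsto (fun R : ℝ => 1 / (2 * R) * (∫ x in (-R)..R, c x) - A₀ * M / R)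
      atTop (𝓝 cbar) := by simpa using htend.sub hzero
  exact le_of_tendsto hT ((eventually_gt_atTop 0).mono fun R hR => hlow R hR)
end
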